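/- Let n ≥ 4 be an integer and let p/q and r/s be Farey neighbors of order n with ⌊n/q⌋ = 1, q < s, and 0 < min{p/q, r/s} < max{p/q, r/s} < 1/2. If λ : [0,1] → ℂ is a continuous function such that λ(0) = e^{2πi p/q}, λ(1) = e^{2πi r/s}, and λ(α)^s − (1−α) λ(α)^{s−q} − α = 0 for every α ∈ [0,1], then λ is injective; that is, the Karpelevič arc with respect to p/q and r/s is simple. -/

import Mathlib

/-- The set of Farey fractions of order `n`:
rationals `p/q` with `0 ≤ p ≤ q ≤ n`, `q ≥ 1`, and `gcd(p,q) = 1`. -/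
def FareySet (n : ℕ) : Set ℚ :=
  {x | ∃ p q : ℕ, 0 < q ∧ p ≤ q ∧ q ≤ n ∧ Nat.gcd p q = 1 ∧ x = (p : ℚ) / q}

/-- `(x, y)` is a Farey pair of order `n` if `x < y`, both belong to `FareySet n`,
and no element of `FareySet n` lies strictly between them. -/
def FareyPair (n : ℕ) (x y : ℚ) : Prop :=
  x < y ∧ x ∈ FareySet n ∧ y ∈ FareySet n ∧ ∀ z ∈ FareySet n, ¬(x < z ∧ z < y)

/-- `x` and `y` are Farey neighbors of order `n` if `(x, y)` or `(y, x)` is a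
Farey pair of order `n`. -/
def FareyNeighbors (n : ℕ) (x y : ℚ) : Prop :=
  FareyPair n x y ∨ FareyPair n y x

/-- Uniqueness of reduced representations of nonnegative rationals. -/
lemma farey_unique {p q r s : ℕ} (hq : 0 < q) (hs : 0 < s)
    (hpq : Nat.gcd p q = 1) (hrs : Nat.gcd r s = 1) (h : (p:ℚ)/q = (r:ℚ)/s) :
    p = r ∧ q = s := by
  have hq' : (q:ℚ) ≠ 0 := by positivity
  have hs' : (s:ℚ) ≠ 0 := by positivity
  have hcross : p * s = r * q := by
    field_simp at h
    exact_mod_cast h.trans (mul_comm _ _)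
  have h1 : q ∣ s := by
    have : q ∣ p * s := Dvd.intro r (by linarith)
    exact (Nat.coprime_comm.mp hpq).dvd_of_dvd_mul_left this
  have h2 : s ∣ q := by
    have : s ∣ r * q := Dvd.intro p (by linarith)
    exact (Nat.coprime_comm.mp hrs).dvd_of_dvd_mul_left this
  have hqs : q = s := Nat.dvd_antisymm h1 h2
  subst hqs
  exact ⟨Nat.eq_of_mul_eq_mul_right hq hcross, rfl⟩

/-- Uniqueness of reduced representations, integer version. -/
lemma farey_unique_int {a b c d : ℤ} (hb : 0 < b) (hd : 0 < d)
    (h1 : IsCoprime a b) (h2 : IsCoprime c d) (h : (a:ℚ)/b = (c:ℚ)/d) :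
    a = c ∧ b = d := by
  have hb' : (b:ℚ) ≠ 0 := by positivity
  have hd' : (d:ℚ) ≠ 0 := by positivity
  have hcross : a * d = c * b := by
    field_simp at h
    exact_mod_cast h.trans (mul_comm _ _)
  have hbd : b ∣ d := by
    have : b ∣ a * d := Dvd.intro c (by linarith)
    exact (h1.symm).dvd_of_dvd_mul_left this
  have hdb : d ∣ b := by
    have : d ∣ c * b := Dvd.intro a (by linarith)
    exact (h2.symm).dvd_of_dvd_mul_left this
  have hbd' : b = d := Int.dvd_antisymm hb.le hd.le hbd hdb
  subst hbd'
  exact ⟨mul_right_cancel₀ (by positivity) hcross, rfl⟩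

/-- A Farey pair of order `n` satisfies the determinant identity `b*c - a*d = 1`. -/
lemma farey_pair_det {n a b c d : ℕ} (hb : 0 < b) (hd : 0 < d) (hbn : b ≤ n) (hdn : d ≤ n)
    (hab : Nat.gcd a b = 1) (hcd : Nat.gcd c d = 1) (hc : c ≤ d)
    (hlt : (a:ℚ)/b < (c:ℚ)/d)
    (hnb : ∀ z ∈ FareySet n, ¬((a:ℚ)/b < z ∧ z < (c:ℚ)/d)) :
    (b:ℤ) * c - (a:ℤ) * d = 1 := by
  have hbQ : (0:ℚ) < b := by positivity
  have hdQ : (0:ℚ) < d := by positivity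
  have hab' : a < b := by
    rcases Nat.lt_or_ge a b with h | h
    · exact h
    · exfalso
      have hcdle : (c:ℚ)/d ≤ 1 := by
        rw [div_le_one hdQ]; exact_mod_cast hc
      have : (1:ℚ) ≤ (a:ℚ)/b := by
        rw [le_div_iff₀ hbQ, one_mul]; exact_mod_cast h
      linarith
  have hbez : (1:ℤ) = a * Nat.gcdA a b + b * Nat.gcdB a b := by
    have := Nat.gcd_eq_gcd_ab a b
    rw [hab] at this; exact_mod_cast this
  obtain ⟨x, y, hxy⟩ : ∃ x y : ℤ, (b:ℤ) * x - a * y = 1 :=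
    ⟨Nat.gcdB a b, -Nat.gcdA a b, by linarith [hbez]⟩
  have hbZ : (0:ℤ) < b := by exact_mod_cast hb
  obtain ⟨D, hD⟩ : ∃ D : ℤ, D = (n:ℤ) - b + 1 + (y - ((n:ℤ) - b + 1)) % b := ⟨_, rfl⟩
  have hmod0 : 0 ≤ (y - ((n:ℤ) - b + 1)) % b := Int.emod_nonneg _ (by omega)
  have hmod1 : (y - ((n:ℤ) - b + 1)) % b < b := Int.emod_lt_of_pos _ hbZ
  have hD1 : (n:ℤ) - b + 1 ≤ D := by omega
  have hD2 : D ≤ n := by omega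
  have hDpos : 1 ≤ D := by omega
  have hDy : (b:ℤ) ∣ D - y := by
    refine ⟨-((y - ((n:ℤ) - b + 1)) / b), ?_⟩
    have h := Int.emod_add_mul_ediv (y - ((n:ℤ) - b + 1)) b
    linarith
  have hdvd : (b:ℤ) ∣ a * D + 1 := by
    have h1 : (b:ℤ) ∣ a * (D - y) := Dvd.dvd.mul_left hDy a
    have h2 : a * D + 1 = a * (D - y) + b * x := by linarith [hxy]
    rw [h2]
    exact dvd_add h1 ⟨x, rfl⟩
  obtain ⟨C, hC⟩ := hdvd
  have hkey : (b:ℤ) * C - a * D = 1 := by linarith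
  have haZ : (0:ℤ) ≤ a := by positivity
  have hCpos : 1 ≤ C := by nlinarith
  have hCD : C ≤ D := by nlinarith [haZ, hDpos, (by exact_mod_cast hab' : (a:ℤ) < b)]
  have hcop : IsCoprime C D := ⟨(b:ℤ), -(a:ℤ), by linarith⟩
  obtain ⟨z, hz⟩ : ∃ z : ℚ, z = (C:ℚ)/(D:ℚ) := ⟨_, rfl⟩
  have hDQ : (0:ℚ) < (D:ℤ) := by exact_mod_cast hDpos
  have hmem : z ∈ FareySet n := by
    refine ⟨C.toNat, D.toNat, ?_, ?_, ?_, ?_, ?_⟩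
    · omega
    · omega
    · omega
    · have h1 : Int.gcd C D = 1 := Int.isCoprime_iff_gcd_eq_one.mp hcop
      have h2 : C.natAbs = C.toNat := by omega
      have h3 : D.natAbs = D.toNat := by omega
      rw [Int.gcd] at h1
      rw [← h2, ← h3]; exact h1
    · have hCt : ((C.toNat : ℕ) : ℚ) = (C:ℚ) := by
        exact_mod_cast congrArg (Int.cast : ℤ → ℚ) (Int.toNat_of_nonneg (by omega : (0:ℤ) ≤ C))
      have hDt : ((D.toNat : ℕ) : ℚ) = (D:ℚ) := by
        exact_mod_cast congrArg (Int.cast : ℤ → ℚ) (Int.toNat_of_nonneg (by omega : (0:ℤ) ≤ D))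
      rw [hz, hCt, hDt]
  have hlt1 : (a:ℚ)/b < z := by
    rw [hz, div_lt_div_iff₀ hbQ hDQ]
    have : (a:ℤ) * D < C * b := by linarith
    exact_mod_cast this
  have hge : (c:ℚ)/d ≤ z := by
    by_contra hcon
    push_neg at hcon
    exact hnb z hmem ⟨hlt1, hcon⟩
  have hle : z ≤ (c:ℚ)/d := by
    by_contra hcon
    push_neg at hcon
    have e1 : (1:ℤ) ≤ b * c - a * d := by
      have : (a:ℚ) * d < c * b := (div_lt_div_iff₀ hbQ hdQ).mp hlt
      have : (a:ℤ) * d < c * b := by exact_mod_cast this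
      linarith
    rw [hz] at hcon
    have e2 : (1:ℤ) ≤ d * C - c * D := by
      have : (c:ℚ) * D < C * d := (div_lt_div_iff₀ hdQ hDQ).mp hcon
      have : (c:ℤ) * D < C * d := by exact_mod_cast this
      linarith
    have hdn' : (d:ℤ) ≤ n := by exact_mod_cast hdn
    have hbnZ : (b:ℤ) ≤ n := by exact_mod_cast hbn
    have id1 : (d:ℤ) = b*(d*C - c*D) + D*(b*c - a*d) := by
      linear_combination (-(d:ℤ)) * hkey
    have t1 : (b:ℤ) * 1 ≤ b * (d*C - c*D) := mul_le_mul_of_nonneg_left e2 hbZ.le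
    have t2 : (D:ℤ) * 1 ≤ D * (b*c - a*d) := mul_le_mul_of_nonneg_left e1 (by omega)
    linarith
  have heq : z = (c:ℚ)/d := le_antisymm hle hge
  rw [hz] at heq
  have hcdcop : IsCoprime (c:ℤ) (d:ℤ) := by
    rw [Int.isCoprime_iff_gcd_eq_one, Int.gcd_natCast_natCast]; exact hcd
  have hcast : (C:ℚ)/(D:ℚ) = ((c:ℤ):ℚ)/((d:ℤ):ℚ) := by
    push_cast
    exact heq
  obtain ⟨h1, h2⟩ := farey_unique_int (by omega : (0:ℤ) < D)
    (by exact_mod_cast hd : (0:ℤ) < (d:ℤ)) hcop hcdcop hcast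
  rw [← h1, ← h2]; exact hkey

/-- Type I Karpelevič arcs are simple: any continuous path of zeros of the Type I
reduced Ito polynomial joining the two endpoints is injective on `[0,1]`. -/
theorem typeI_arc_simple (n p q r s : ℕ) (hn : 4 ≤ n) (hq : 0 < q) (hqs : q < s)
    (hpq : Nat.gcd p q = 1) (hrs : Nat.gcd r s = 1)
    (hnbr : FareyNeighbors n ((p : ℚ) / q) ((r : ℚ) / s))
    (hfloor : n / q = 1)
    (hmin : 0 < min ((p : ℚ) / q) ((r : ℚ) / s))
    (hmax : max ((p : ℚ) / q) ((r : ℚ) / s) < 1 / 2)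
    (l : ℝ → ℂ) (hcont : ContinuousOn l (Set.Icc (0 : ℝ) 1))
    (h0 : l 0 = Complex.exp (2 * Real.pi * Complex.I * ((p : ℂ) / (q : ℂ))))
    (h1 : l 1 = Complex.exp (2 * Real.pi * Complex.I * ((r : ℂ) / (s : ℂ))))
    (hroot : ∀ α ∈ Set.Icc (0 : ℝ) 1,
      l α ^ s - ((1 : ℂ) - (α : ℂ)) * l α ^ (s - q) - (α : ℂ) = 0) :
    Set.InjOn l (Set.Icc (0 : ℝ) 1) := by
  have hs : 0 < s := hq.trans hqs
  -- extract bounds from membership in the Farey set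
  have getrep : ∀ {u v : ℕ}, 0 < v → Nat.gcd u v = 1 → (u:ℚ)/v ∈ FareySet n →
      u ≤ v ∧ v ≤ n := by
    rintro u v hv huv ⟨p', q', hq', hle, hqn, hg, heq⟩
    obtain ⟨e1, e2⟩ := farey_unique hq' hv hg huv heq.symm
    subst e1; subst e2
    exact ⟨hle, hqn⟩
  -- the determinant identity from the Farey-neighbor hypothesis
  have hdet : (q:ℤ)*r - p*s = 1 ∨ (s:ℤ)*p - r*q = 1 := by
    rcases hnbr with ⟨hlt, hx, hy, hnb⟩ | ⟨hlt, hx, hy, hnb⟩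
    · obtain ⟨hpq', hqn⟩ := getrep hq hpq hx
      obtain ⟨hrs', hsn⟩ := getrep hs hrs hy
      exact Or.inl (farey_pair_det hq hs hqn hsn hpq hrs hrs' hlt hnb)
    · obtain ⟨hrs', hsn⟩ := getrep hs hrs hx
      obtain ⟨hpq', hqn⟩ := getrep hq hpq hy
      exact Or.inr (farey_pair_det hs hq hsn hqn hrs hpq hpq' hlt hnb)
  -- hence q and s are coprime
  have hcop : Nat.gcd q s = 1 := by
    have d1 : ((Nat.gcd q s : ℕ):ℤ) ∣ (q:ℤ) := Int.natCast_dvd_natCast.mpr (Nat.gcd_dvd_left q s)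
    have d2 : ((Nat.gcd q s : ℕ):ℤ) ∣ (s:ℤ) := Int.natCast_dvd_natCast.mpr (Nat.gcd_dvd_right q s)
    have hdvd1 : ((Nat.gcd q s : ℕ):ℤ) ∣ 1 := by
      rcases hdet with h | h
      · rw [← h]; exact dvd_sub (d1.mul_right r) (d2.mul_left p)
      · rw [← h]; exact dvd_sub (d2.mul_right p) (d1.mul_left r)
    have : Nat.gcd q s ∣ 1 := by exact_mod_cast hdvd1
    exact Nat.dvd_one.mp this
  -- bounds on p/q
  have hpq0 : (0:ℚ) < (p:ℚ)/q := lt_of_lt_of_le hmin (min_le_left _ _)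
  have hpq2 : (p:ℚ)/q < 1/2 := lt_of_le_of_lt (le_max_left _ _) hmax
  -- l 0 ≠ 1
  have hl0 : l 0 ≠ 1 := by
    rw [h0]
    intro hone
    rw [Complex.exp_eq_one_iff] at hone
    obtain ⟨m, hm⟩ := hone
    have hq0 : (q:ℂ) ≠ 0 := Nat.cast_ne_zero.mpr hq.ne'
    have hpi : (2 * (Real.pi:ℂ) * Complex.I) ≠ 0 := by
      simp [Real.pi_ne_zero, Complex.I_ne_zero]
    have hfrac : (p:ℂ)/(q:ℂ) = (m:ℂ) := by
      apply mul_left_cancel₀ hpi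
      rw [hm]; ring
    have hpm : (p:ℤ) = m * q := by
      have : (p:ℂ) = (m:ℂ) * q := by
        field_simp at hfrac
        linear_combination hfrac
      exact_mod_cast this
    have hfq : (p:ℚ)/q = (m:ℚ) := by
      have hqQ : (q:ℚ) ≠ 0 := Nat.cast_ne_zero.mpr hq.ne'
      rw [div_eq_iff hqQ]
      exact_mod_cast hpm
    rw [hfq] at hpq0 hpq2
    have hm0 : (0:ℤ) < m := by exact_mod_cast hpq0
    have hm1 : (1:ℚ) ≤ (m:ℚ) := by exact_mod_cast hm0
    linarith
  -- factor the polynomial through (l α - 1)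
  set g : ℝ → ℂ := fun α =>
    (∑ i ∈ Finset.range s, l α ^ i) - (1 - (α:ℂ)) * ∑ i ∈ Finset.range (s - q), l α ^ i
    with hgdef
  have hkeyfact : ∀ α ∈ Set.Icc (0:ℝ) 1, (l α - 1) * g α = 0 := by
    intro α hα
    have G1 := geom_sum_mul (l α) s
    have G2 := geom_sum_mul (l α) (s - q)
    simp only [hgdef]
    linear_combination hroot α hα + G1 - (1 - (α:ℂ)) * G2
  have hgcont : ContinuousOn g (Set.Icc (0:ℝ) 1) := by
    apply ContinuousOn.sub
    · exact continuousOn_finset_sum _ (fun i _ => hcont.pow i)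
    · exact ContinuousOn.mul
        ((continuous_const.sub Complex.continuous_ofReal).continuousOn)
        (continuousOn_finset_sum _ (fun i _ => hcont.pow i))
  have hgne : ∀ α ∈ Set.Icc (0:ℝ) 1, l α = 1 → g α ≠ 0 := by
    intro α hα hone
    have hval : g α = (((q:ℝ) + α * ((s:ℝ) - q) : ℝ) : ℂ) := by
      simp only [hgdef, hone, one_pow, Finset.sum_const, Finset.card_range, nsmul_eq_mul,
        mul_one]
      push_cast [Nat.cast_sub hqs.le]
      ring
    rw [hval]
    have hpos : (0:ℝ) < (q:ℝ) + α * ((s:ℝ) - q) := by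
      have h1 : (0:ℝ) ≤ α := hα.1
      have h2 : (q:ℝ) < s := by exact_mod_cast hqs
      have h3 : (1:ℝ) ≤ q := by exact_mod_cast hq
      nlinarith
    exact_mod_cast hpos.ne'
  -- l never takes the value 1
  have hnever : ∀ α ∈ Set.Icc (0:ℝ) 1, l α ≠ 1 := by
    by_contra hcon
    push_neg at hcon
    obtain ⟨α₀, hα₀, hone⟩ := hcon
    haveI : PreconnectedSpace (Set.Icc (0:ℝ) 1) := Subtype.preconnectedSpace isPreconnected_Icc
    set K := Set.Icc (0:ℝ) 1 with hK
    have hF : Continuous (K.restrict l) := continuousOn_iff_continuous_restrict.mp hcont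
    have hG : Continuous (K.restrict g) := continuousOn_iff_continuous_restrict.mp hgcont
    have hclopen : IsClopen {x : K | l x = 1} := by
      constructor
      · exact isClosed_eq hF continuous_const
      · rw [isOpen_iff_mem_nhds]
        intro x hx
        have hGx : g x ≠ 0 := hgne x x.2 hx
        have hUopen : IsOpen {y : K | g y ≠ 0} := by
          have : IsClosed {y : K | K.restrict g y = 0} := isClosed_eq hG continuous_const
          exact this.isOpen_compl
        refine Filter.mem_of_superset (hUopen.mem_nhds hGx) ?_
        intro y hy
        have hk := hkeyfact y y.2
        have : l y - 1 = 0 := by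
          rcases mul_eq_zero.mp hk with h | h
          · exact h
          · exact absurd h hy
        simpa [sub_eq_zero] using this
    rcases isClopen_iff.mp hclopen with h | h
    · have : (⟨α₀, hα₀⟩ : K) ∈ {x : K | l x = 1} := hone
      rw [h] at this
      exact this
    · have h0K : ((0:ℝ)) ∈ K := by rw [hK]; norm_num
      have : (⟨0, h0K⟩ : K) ∈ {x : K | l x = 1} := by rw [h]; trivial
      exact hl0 this
  -- injectivity
  intro a ha b hb hab
  by_contra hne
  have hA := hroot a ha
  have hB := hroot b hb
  rw [← hab] at hB
  have hsub : ((a:ℂ) - b) * (l a ^ (s - q) - 1) = 0 := by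
    linear_combination hA - hB
  have hane : ((a:ℂ) - (b:ℂ)) ≠ 0 := by
    rw [sub_ne_zero]
    exact fun h => hne (Complex.ofReal_injective h)
  have hw1 : l a ^ (s - q) = 1 := by
    rcases mul_eq_zero.mp hsub with h | h
    · exact absurd h hane
    · rwa [sub_eq_zero] at h
  have hsplit : l a ^ s = l a ^ (s - q) * l a ^ q := by
    rw [← pow_add, Nat.sub_add_cancel hqs.le]
  have hwq : l a ^ q = 1 := by
    rw [hsplit, hw1, one_mul] at hA
    linear_combination hA
  have hws : l a ^ s = 1 := by rw [hsplit, hw1, one_mul, hwq]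
  have hwne : l a ≠ 0 := by
    intro h
    rw [h, zero_pow hq.ne'] at hwq
    exact zero_ne_one hwq
  have hbez : (1:ℤ) = q * Nat.gcdA q s + s * Nat.gcdB q s := by
    have := Nat.gcd_eq_gcd_ab q s
    rw [hcop] at this
    exact_mod_cast this
  have hone : l a = 1 := by
    calc l a = l a ^ ((q:ℤ) * Nat.gcdA q s + (s:ℤ) * Nat.gcdB q s) := by
          rw [← hbez]; simp
      _ = (l a ^ (q:ℤ)) ^ Nat.gcdA q s * (l a ^ (s:ℤ)) ^ Nat.gcdB q s := by
          rw [zpow_add₀ hwne, zpow_mul, zpow_mul]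
      _ = 1 := by
          rw [zpow_natCast, zpow_natCast, hwq, hws, one_zpow, one_zpow, one_mul]
  exact hnever a ha hone
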